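/- Let f : ℕ → ℝ≥0 be concave (non-decreasing with f(n+m)-f(n) ≤ f(n)-f(n-m) for n ≥ m) with property (C_p) for some p > 1. Then ∑_{n=1}^∞ (f(2^n)/2^n)^p < ∞. -/

import Mathlib

/-- If `f` is concave (non-decreasing, `f(n+m)-f(n) ≤ f(n)-f(n-m)` for `m ≤ n`) and has
property (C_p) for some `p > 1`, then `∑_{n ≥ 1} (f(2^n)/2^n)^p < ∞`. -/
theorem stmt18 (p : ℝ) (hp : 1 < p) (f : ℕ → ℝ) (hf0 : ∀ n, 0 ≤ f n)
    (hmono : Monotone f)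
    (hconc : ∀ m n : ℕ, m ≤ n → f (n + m) - f n ≤ f n - f (n - m))
    (hCp : Summable (fun n : ℕ => (1 / ((n : ℝ) + 1)) * (f (n + 1) / ((n : ℝ) + 1)) ^ p)) :
    Summable (fun n : ℕ => (f (2 ^ (n + 1)) / ((2 : ℝ) ^ (n + 1))) ^ p) := by
  set g : ℕ → ℝ := fun i => (1 / ((i : ℝ) + 1)) * (f (i + 1) / ((i : ℝ) + 1)) ^ p with hgdef
  have hg0 : ∀ i, 0 ≤ g i := fun i =>
    mul_nonneg (by positivity) (Real.rpow_nonneg (div_nonneg (hf0 _) (by positivity)) p)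
  set B : ℕ → ℝ := fun n => ∑ j ∈ Finset.Ico (2 ^ n) (2 ^ (n + 1)), g j with hBdef
  have hB0 : ∀ n, 0 ≤ B n := fun n => Finset.sum_nonneg fun j _ => hg0 j
  -- partial sums of B
  have hpart : ∀ N, ∑ n ∈ Finset.range N, B n = ∑ j ∈ Finset.Ico 1 (2 ^ N), g j := by
    intro N
    induction N with
    | zero => simp
    | succ N ih =>
      rw [Finset.sum_range_succ, ih, hBdef]
      exact Finset.sum_Ico_consecutive _ (Nat.one_le_two_pow)
        (Nat.pow_le_pow_right (by norm_num) (Nat.le_succ N))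
  have hBsum : Summable B := by
    apply summable_of_sum_range_le hB0 (c := ∑' i, g i)
    intro N
    rw [hpart]
    exact Summable.sum_le_tsum _ (fun j _ => hg0 j) hCp
  -- key pointwise bound
  have hdouble : ∀ n : ℕ, f (2 ^ (n + 1)) ≤ 2 * f (2 ^ n) := by
    intro n
    have h := hconc (2 ^ n) (2 ^ n) le_rfl
    have h2 : 2 ^ n + 2 ^ n = 2 ^ (n + 1) := by ring
    rw [h2] at h
    have := hf0 (2 ^ n - 2 ^ n)
    linarith
  have hp0 : (0 : ℝ) ≤ p := le_of_lt (lt_trans one_pos hp)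
  have key : ∀ n : ℕ, (f (2 ^ (n + 1)) / ((2 : ℝ) ^ (n + 1))) ^ p ≤ (2 * 2 ^ p) * B n := by
    intro n
    set x : ℝ := f (2 ^ (n + 1)) with hx
    set D : ℝ := (2 : ℝ) ^ (n + 1) with hD
    have hDpos : (0 : ℝ) < D := by positivity
    have hx0 : 0 ≤ x := hf0 _
    set c : ℝ := (1 / D) * ((x / 2) / D) ^ p with hc
    have hterm : ∀ j ∈ Finset.Ico (2 ^ n) (2 ^ (n + 1)), c ≤ g j := by
      intro j hj
      simp only [Finset.mem_Ico] at hj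
      have hj1 : ((j : ℝ) + 1) ≤ D := by
        rw [hD]
        exact_mod_cast Nat.cast_le.mpr hj.2
      have hjpos : (0 : ℝ) < (j : ℝ) + 1 := by positivity
      have hfj : x / 2 ≤ f (j + 1) := by
        have h1 : f (2 ^ n) ≤ f (j + 1) := hmono (le_trans hj.1 (Nat.le_succ j))
        have h2 := hdouble n
        rw [← hx] at h2
        linarith
      apply mul_le_mul
      · exact one_div_le_one_div_of_le hjpos hj1
      · exact Real.rpow_le_rpow (div_nonneg (by positivity) hDpos.le)
          (div_le_div₀ (hf0 _) hfj hjpos hj1) hp0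
      · exact Real.rpow_nonneg (div_nonneg (by positivity) hDpos.le) p
      · positivity
    have hcard : (Finset.Ico (2 ^ n) (2 ^ (n + 1))).card = 2 ^ n := by
      rw [Nat.card_Ico, pow_succ]; omega
    have hsum : ((2 : ℝ) ^ n) * c ≤ B n := by
      have h := Finset.card_nsmul_le_sum (Finset.Ico (2 ^ n) (2 ^ (n + 1))) g c hterm
      rw [hcard, nsmul_eq_mul] at h
      rw [hBdef] at *
      push_cast at h
      exact h
    have h2p : (0 : ℝ) < 2 ^ p := Real.rpow_pos_of_pos two_pos p
    have heq : (x / D) ^ p = (2 * 2 ^ p) * (((2 : ℝ) ^ n) * c) := by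
      rw [hc, show (x / 2) / D = (x / D) / 2 by ring,
        Real.div_rpow (div_nonneg hx0 hDpos.le) (by norm_num)]
      have hDn : D = 2 * 2 ^ n := by rw [hD]; ring
      rw [hDn]
      field_simp
    rw [heq]
    have : (0 : ℝ) < 2 * 2 ^ p := by positivity
    exact mul_le_mul_of_nonneg_left hsum (by positivity)
  apply Summable.of_nonneg_of_le
    (fun n => Real.rpow_nonneg (div_nonneg (hf0 _) (by positivity)) p) key
  exact hBsum.mul_left _
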